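/- Let G be a graph with tree decomposition (T, bag) of width k, and suppose t₁, t₂ are adjacent nodes of T with disjoint bags bag(t₁) = {x₁,…,x_m} and bag(t₂) = {y₁,…,y_m}, and let M = {{x_i, y_i} : 1 ≤ i ≤ m} be a perfect matching between the two bags. Then the graph G ∪ M (G with the matching edges added) has treewidth at most k + 1. -/

import Mathlib

/-- `(tr, bag)` is a tree decomposition of the graph `G`. -/
def IsTreeDecomp {V T : Type} (G : SimpleGraph V) (tr : SimpleGraph T)
    (bag : T → Set V) : Prop :=
  tr.IsTree ∧ (∀ v : V, ∃ t, v ∈ bag t) ∧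
    (∀ v : V, ((tr.induce {t | v ∈ bag t}).Connected)) ∧
    ∀ u v : V, G.Adj u v → ∃ t, u ∈ bag t ∧ v ∈ bag t

/-- The treewidth of a graph: the least `k` admitting a width-`k` tree decomposition. -/
noncomputable def treewidth {V : Type} (G : SimpleGraph V) : ℕ :=
  sInf {k | ∃ (T : Type) (tr : SimpleGraph T) (bag : T → Set V),
    IsTreeDecomp G tr bag ∧ ∀ t, (bag t).ncard ≤ k + 1}


open SimpleGraph Sum

variable {T : Type}

/-- The subdivided tree: `tr` with edge `t₁t₂` replaced by a path through `Fin m`. -/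
def subdivTree (tr : SimpleGraph T) (t₁ t₂ : T) (m : ℕ) : SimpleGraph (T ⊕ Fin m) :=
  SimpleGraph.fromRel (fun u v => match u, v with
    | .inl a, .inl b => tr.Adj a b ∧ ¬(a = t₁ ∧ b = t₂) ∧ ¬(a = t₂ ∧ b = t₁)
    | .inl a, .inr j => (a = t₁ ∧ j.val = 0) ∨ (a = t₂ ∧ j.val + 1 = m)
    | .inr _, .inl _ => False
    | .inr j, .inr j' => j.val + 1 = j'.val)

variable {tr : SimpleGraph T} {t₁ t₂ : T} {m : ℕ}

lemma subdiv_adj_inl_inl {a b : T} :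
    (subdivTree tr t₁ t₂ m).Adj (inl a) (inl b) ↔
      tr.Adj a b ∧ ¬(a = t₁ ∧ b = t₂) ∧ ¬(a = t₂ ∧ b = t₁) := by
  simp only [subdivTree, fromRel_adj]
  constructor
  · rintro ⟨hne, h | h⟩
    · exact h
    · exact ⟨h.1.symm, fun hc => h.2.2 ⟨hc.2, hc.1⟩, fun hc => h.2.1 ⟨hc.2, hc.1⟩⟩
  · intro h
    exact ⟨by simpa using h.1.ne, Or.inl h⟩

lemma subdiv_adj_inl_inr {a : T} {j : Fin m} :
    (subdivTree tr t₁ t₂ m).Adj (inl a) (inr j) ↔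
      (a = t₁ ∧ j.val = 0) ∨ (a = t₂ ∧ j.val + 1 = m) := by
  simp only [subdivTree, fromRel_adj]
  constructor
  · rintro ⟨hne, h | h⟩
    · exact h
    · exact h.elim
  · intro h
    exact ⟨by simp, Or.inl h⟩

lemma subdiv_adj_inr_inl {a : T} {j : Fin m} :
    (subdivTree tr t₁ t₂ m).Adj (inr j) (inl a) ↔
      (a = t₁ ∧ j.val = 0) ∨ (a = t₂ ∧ j.val + 1 = m) := by
  rw [adj_comm]; exact subdiv_adj_inl_inr

lemma subdiv_adj_inr_inr {j j' : Fin m} :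
    (subdivTree tr t₁ t₂ m).Adj (inr j) (inr j') ↔
      j.val + 1 = j'.val ∨ j'.val + 1 = j.val := by
  simp only [subdivTree, fromRel_adj]
  constructor
  · rintro ⟨hne, h | h⟩
    · exact Or.inl h
    · exact Or.inr h
  · intro h
    refine ⟨?_, by tauto⟩
    rcases h with h | h <;> · simp only [ne_eq, inr.injEq]; intro hc; subst hc; omega

/-- If all edges of `H` respect membership in `S`, then so does reachability. -/
lemma reachable_mem_iff {α : Type*} {H : SimpleGraph α} {S : Set α}
    (hS : ∀ u v, H.Adj u v → (u ∈ S ↔ v ∈ S)) {u v : α} (h : H.Reachable u v) :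
    u ∈ S ↔ v ∈ S := by
  obtain ⟨w⟩ := h
  induction w with
  | nil => rfl
  | cons h w ih => exact (hS _ _ h).trans ih

lemma subdiv_reach_inr (hm : 0 < m) :
    ∀ (n : ℕ) (hn : n < m), (subdivTree tr t₁ t₂ m).Reachable (inl t₁) (inr ⟨n, hn⟩) := by
  intro n
  induction n with
  | zero => intro hn; exact (Adj.reachable (by rw [subdiv_adj_inl_inr]; exact Or.inl ⟨rfl, rfl⟩))
  | succ n ih =>
    intro hn
    refine (ih (by omega)).trans (Adj.reachable ?_)
    rw [subdiv_adj_inr_inr]; exact Or.inl rfl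

lemma subdiv_reach_t₂ (hm : 0 < m) :
    (subdivTree tr t₁ t₂ m).Reachable (inl t₁) (inl t₂) := by
  refine (subdiv_reach_inr hm (m - 1) (by omega)).trans (Adj.reachable ?_)
  rw [subdiv_adj_inr_inl]; exact Or.inr ⟨rfl, Nat.succ_pred_eq_of_pos hm⟩

lemma subdiv_reach_inl (hm : 0 < m) {a b : T} (w : tr.Walk a b) :
    (subdivTree tr t₁ t₂ m).Reachable (inl a) (inl b) := by
  induction w with
  | nil => rfl
  | @cons u v c h w ih =>
    refine Reachable.trans ?_ ih
    by_cases h1 : u = t₁ ∧ v = t₂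
    · exact h1.1 ▸ h1.2 ▸ subdiv_reach_t₂ hm
    · by_cases h2 : u = t₂ ∧ v = t₁
      · exact h2.1 ▸ h2.2 ▸ (subdiv_reach_t₂ hm).symm
      · exact Adj.reachable (subdiv_adj_inl_inl.2 ⟨h, h1, h2⟩)

lemma subdiv_connected (hc : tr.Connected) (hm : 0 < m) :
    (subdivTree tr t₁ t₂ m).Connected := by
  rw [connected_iff]
  refine ⟨fun u v => ?_, ⟨inl t₁⟩⟩
  have key : ∀ w, (subdivTree tr t₁ t₂ m).Reachable (inl t₁) w := by
    rintro (a | j)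
    · exact subdiv_reach_inl hm (hc.preconnected t₁ a).some
    · exact subdiv_reach_inr hm j.1 j.2
  exact (key u).symm.trans (key v)

lemma sdiff_single_adj {α : Type*} {G : SimpleGraph α} {e : Sym2 α} {p q : α} :
    (G \ SimpleGraph.fromEdgeSet {e}).Adj p q ↔ G.Adj p q ∧ s(p, q) ≠ e := by
  rw [sdiff_adj, fromEdgeSet_adj]
  constructor
  · rintro ⟨h1, h2⟩
    exact ⟨h1, fun hc => h2 ⟨by simp [hc], h1.ne⟩⟩
  · rintro ⟨h1, h2⟩
    exact ⟨h1, fun hc => h2 (by simpa using hc.1)⟩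

/-- The set of vertices on the `a` side of the tree edge `ab`. -/
def sideSet (tr : SimpleGraph T) (a b : T) : Set T :=
  {t | (tr \ SimpleGraph.fromEdgeSet {s(a, b)}).Reachable a t}

lemma mem_sideSet_self {a b : T} : a ∈ sideSet tr a b := Reachable.refl _

lemma not_mem_sideSet (htree : tr.IsTree) {a b : T} (hab : tr.Adj a b) :
    b ∉ sideSet tr a b := by
  have := (isAcyclic_iff_forall_adj_isBridge.mp htree.IsAcyclic hab)
  rw [isBridge_iff] at this
  exact this

lemma sideSet_closed {a b u v : T} (h : tr.Adj u v) (hne : s(u, v) ≠ s(a, b)) :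
    u ∈ sideSet tr a b ↔ v ∈ sideSet tr a b := by
  have hadj : (tr \ SimpleGraph.fromEdgeSet {s(a, b)}).Adj u v := sdiff_single_adj.2 ⟨h, hne⟩
  exact ⟨fun hr => hr.trans hadj.reachable, fun hr => hr.trans hadj.symm.reachable⟩

lemma sym2_ne_of_inl {p q a b : T} (hne : (s(Sum.inl p, Sum.inl q) : Sym2 (T ⊕ Fin m)) ≠
    s(Sum.inl a, Sum.inl b)) : s(p, q) ≠ s(a, b) :=
  fun hc => hne (by simpa using congrArg (Sym2.map (Sum.inl : T → T ⊕ Fin m)) hc)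

lemma sym2_ne_t₁t₂ {p q : T} (h1 : ¬(p = t₁ ∧ q = t₂)) (h2 : ¬(p = t₂ ∧ q = t₁)) :
    s(p, q) ≠ s(t₁, t₂) := by
  rw [ne_eq, Sym2.eq_iff]; tauto

lemma subdiv_not_reach_inl_inl (htree : tr.IsTree) (hadj : tr.Adj t₁ t₂)
    {a b : T} (h : (subdivTree tr t₁ t₂ m).Adj (inl a) (inl b)) :
    ¬((subdivTree tr t₁ t₂ m) \ SimpleGraph.fromEdgeSet {s(inl a, inl b)}).Reachable
      (inl a) (inl b) := by
  obtain ⟨hab, h1, h2⟩ := subdiv_adj_inl_inl.1 h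
  have key : s(t₂, t₁) ≠ s(a, b) := by
    rw [ne_eq, Sym2.eq_iff]
    rintro (⟨ha, hb⟩ | ⟨ha, hb⟩)
    · exact h2 ⟨ha.symm, hb.symm⟩
    · exact h1 ⟨hb.symm, ha.symm⟩
  intro hreach
  have hiff := reachable_mem_iff
    (S := {w | Sum.elim (· ∈ sideSet tr a b) (fun _ => t₁ ∈ sideSet tr a b) w}) ?_ hreach
  · simp only [Set.mem_setOf_eq, Sum.elim_inl] at hiff
    exact not_mem_sideSet htree hab (hiff.mp mem_sideSet_self)
  · rintro (p | i) (q | i') hpq <;>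
      obtain ⟨hadj', hne⟩ := sdiff_single_adj.1 hpq <;>
      simp only [Set.mem_setOf_eq, Sum.elim_inl, Sum.elim_inr]
    · exact sideSet_closed (subdiv_adj_inl_inl.1 hadj').1 (sym2_ne_of_inl hne)
    · rcases subdiv_adj_inl_inr.1 hadj' with ⟨rfl, _⟩ | ⟨hp, _⟩
      · exact Iff.rfl
      · rw [hp]
        exact sideSet_closed hadj.symm key
    · rcases subdiv_adj_inr_inl.1 hadj' with ⟨rfl, _⟩ | ⟨hq, _⟩
      · exact Iff.rfl
      · rw [hq]
        exact (sideSet_closed hadj.symm key).symm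

lemma sym2_ne_t₂t₁ {p q : T} (h1 : ¬(p = t₁ ∧ q = t₂)) (h2 : ¬(p = t₂ ∧ q = t₁)) :
    s(p, q) ≠ s(t₂, t₁) := by
  rw [ne_eq, Sym2.eq_iff]; tauto

lemma subdiv_not_reach_inl_inr (htree : tr.IsTree) (hadj : tr.Adj t₁ t₂)
    {a : T} {j : Fin m} (h : (subdivTree tr t₁ t₂ m).Adj (inl a) (inr j)) :
    ¬((subdivTree tr t₁ t₂ m) \ SimpleGraph.fromEdgeSet {s(inl a, inr j)}).Reachable
      (inl a) (inr j) := by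
  intro hreach
  rcases subdiv_adj_inl_inr.1 h with ⟨ha, hj⟩ | ⟨ha, hj⟩ <;> rw [ha] at hreach
  · have hiff := reachable_mem_iff
      (S := {w | Sum.elim (· ∈ sideSet tr t₁ t₂) (fun _ => False) w}) ?_ hreach
    · simp only [Set.mem_setOf_eq, Sum.elim_inl, Sum.elim_inr, iff_false] at hiff
      exact hiff mem_sideSet_self
    · rintro (p | i) (q | i') hpq <;>
        obtain ⟨hadj', hne⟩ := sdiff_single_adj.1 hpq <;>
        simp only [Set.mem_setOf_eq, Sum.elim_inl, Sum.elim_inr, iff_false,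
          false_iff, iff_self]
      · obtain ⟨hpq', h1, h2⟩ := subdiv_adj_inl_inl.1 hadj'
        exact sideSet_closed hpq' (sym2_ne_t₁t₂ h1 h2)
      · rcases subdiv_adj_inl_inr.1 hadj' with ⟨hp, hi⟩ | ⟨hp, _⟩
        · exact absurd (by rw [hp, show i' = j from Fin.ext (by omega)]) hne
        · rw [hp]; exact not_mem_sideSet htree hadj
      · rcases subdiv_adj_inr_inl.1 hadj' with ⟨hq, hi⟩ | ⟨hq, _⟩
        · exact absurd (by rw [hq, show i = j from Fin.ext (by omega), Sym2.eq_swap]) hne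
        · rw [hq]; exact not_mem_sideSet htree hadj
  · have hiff := reachable_mem_iff
      (S := {w | Sum.elim (· ∈ sideSet tr t₂ t₁) (fun _ => False) w}) ?_ hreach
    · simp only [Set.mem_setOf_eq, Sum.elim_inl, Sum.elim_inr, iff_false] at hiff
      exact hiff mem_sideSet_self
    · rintro (p | i) (q | i') hpq <;>
        obtain ⟨hadj', hne⟩ := sdiff_single_adj.1 hpq <;>
        simp only [Set.mem_setOf_eq, Sum.elim_inl, Sum.elim_inr, iff_false,
          false_iff, iff_self]
      · obtain ⟨hpq', h1, h2⟩ := subdiv_adj_inl_inl.1 hadj'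
        exact sideSet_closed hpq' (sym2_ne_t₂t₁ h1 h2)
      · rcases subdiv_adj_inl_inr.1 hadj' with ⟨hp, _⟩ | ⟨hp, hi⟩
        · rw [hp]; exact not_mem_sideSet htree hadj.symm
        · exact absurd (by rw [hp, show i' = j from Fin.ext (by omega)]) hne
      · rcases subdiv_adj_inr_inl.1 hadj' with ⟨hq, _⟩ | ⟨hq, hi⟩
        · rw [hq]; exact not_mem_sideSet htree hadj.symm
        · exact absurd (by rw [hq, show i = j from Fin.ext (by omega), Sym2.eq_swap]) hne

lemma subdiv_not_reach_inr_inr_aux (htree : tr.IsTree) (hadj : tr.Adj t₁ t₂)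
    {j j' : Fin m} (hj : j.val + 1 = j'.val) :
    ¬((subdivTree tr t₁ t₂ m) \ SimpleGraph.fromEdgeSet {s(inr j, inr j')}).Reachable
      (inr j) (inr j') := by
  intro hreach
  have hiff := reachable_mem_iff
    (S := {w | Sum.elim (· ∈ sideSet tr t₁ t₂) (fun i : Fin m => i.val ≤ j.val) w}) ?_ hreach
  · simp only [Set.mem_setOf_eq, Sum.elim_inr] at hiff
    have := hiff.mp le_rfl
    omega
  · rintro (p | i) (q | i') hpq <;>
      obtain ⟨hadj', hne⟩ := sdiff_single_adj.1 hpq <;>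
      simp only [Set.mem_setOf_eq, Sum.elim_inl, Sum.elim_inr]
    · obtain ⟨hpq', h1, h2⟩ := subdiv_adj_inl_inl.1 hadj'
      exact sideSet_closed hpq' (sym2_ne_t₁t₂ h1 h2)
    · rcases subdiv_adj_inl_inr.1 hadj' with ⟨hp, hi⟩ | ⟨hp, hi⟩
      · rw [hp]; exact iff_of_true mem_sideSet_self (by omega)
      · rw [hp]
        have := j'.isLt
        exact iff_of_false (not_mem_sideSet htree hadj) (by omega)
    · rcases subdiv_adj_inr_inl.1 hadj' with ⟨hq, hi⟩ | ⟨hq, hi⟩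
      · rw [hq]; exact iff_of_true (by omega) mem_sideSet_self
      · rw [hq]
        have := j'.isLt
        exact iff_of_false (by omega) (not_mem_sideSet htree hadj)
    · have hv := subdiv_adj_inr_inr.1 hadj'
      simp only [ne_eq, Sym2.eq_iff, inr.injEq, Fin.ext_iff] at hne
      omega

lemma subdiv_isAcyclic (htree : tr.IsTree) (hadj : tr.Adj t₁ t₂) :
    (subdivTree tr t₁ t₂ m).IsAcyclic := by
  rw [isAcyclic_iff_forall_adj_isBridge]
  rintro (a | j) (b | j') h <;> rw [isBridge_iff]
  · exact subdiv_not_reach_inl_inl htree hadj h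
  · exact subdiv_not_reach_inl_inr htree hadj h
  · rw [Sym2.eq_swap]
    exact fun hr => subdiv_not_reach_inl_inr htree hadj h.symm hr.symm
  · rcases subdiv_adj_inr_inr.1 h with hj | hj
    · exact subdiv_not_reach_inr_inr_aux htree hadj hj
    · rw [Sym2.eq_swap]
      exact fun hr => subdiv_not_reach_inr_inr_aux htree hadj hj hr.symm

variable {V : Type}

/-- The bags for the subdivided tree decomposition. -/
def subdivBag (bag : T → Set V) (x y : Fin m → V) : T ⊕ Fin m → Set V :=
  Sum.elim bag (fun j => x '' {i | j ≤ i} ∪ y '' {i | i ≤ j})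

lemma subdivBag_inr_ncard (bag : T → Set V) (x y : Fin m → V) (j : Fin m) :
    (subdivBag bag x y (inr j)).ncard ≤ m + 1 := by
  have e1 : ({i : Fin m | j ≤ i} : Set (Fin m)) = ↑(Finset.Ici j) := by ext; simp
  have e2 : ({i : Fin m | i ≤ j} : Set (Fin m)) = ↑(Finset.Iic j) := by ext; simp
  calc (subdivBag bag x y (inr j)).ncard
      ≤ (x '' {i | j ≤ i}).ncard + (y '' {i | i ≤ j}).ncard := Set.ncard_union_le _ _
    _ ≤ ({i : Fin m | j ≤ i}).ncard + ({i : Fin m | i ≤ j}).ncard :=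
        Nat.add_le_add (Set.ncard_image_le (Set.toFinite _)) (Set.ncard_image_le (Set.toFinite _))
    _ ≤ m + 1 := by
        rw [e1, e2, Set.ncard_coe_finset, Set.ncard_coe_finset, Fin.card_Ici, Fin.card_Iic]
        omega

lemma support_conn_A {bag : T → Set V} {x y : Fin m → V}
    (hb₁ : bag t₁ = Set.range x) {v : V}
    (hvx : v ∉ Set.range x) (hvy : v ∉ Set.range y)
    (hcv : (tr.induce {t | v ∈ bag t}).Connected) :
    ((subdivTree tr t₁ t₂ m).induce {w | v ∈ subdivBag bag x y w}).Connected := by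
  have hnot : ∀ t ∈ {t | v ∈ bag t}, t ≠ t₁ := by
    rintro t ht rfl
    exact hvx (hb₁ ▸ ht)
  refine Connected.map (G := tr.induce {t | v ∈ bag t})
    ⟨fun p => ⟨inl p.1, p.2⟩, ?_⟩ ?_ hcv
  · rintro ⟨p, hp⟩ ⟨q, hq⟩ hpq
    simp only [comap_adj, Function.Embedding.coe_subtype] at hpq ⊢
    exact subdiv_adj_inl_inl.2 ⟨hpq, fun hc => hnot p hp hc.1, fun hc => hnot q hq hc.2⟩
  · rintro ⟨(t | j), hw⟩
    · exact ⟨⟨t, hw⟩, rfl⟩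
    · exfalso
      simp only [Set.mem_setOf_eq, subdivBag, Sum.elim_inr, Set.mem_union, Set.mem_image] at hw
      rcases hw with ⟨i, _, hi⟩ | ⟨i, _, hi⟩
      · exact hvx ⟨i, hi⟩
      · exact hvy ⟨i, hi⟩

/-- The canonical hom between induced subgraphs on the `inl` part. -/
def inlHom (tr : SimpleGraph T) (t₁ t₂ : T) {S : Set T} {S' : Set (T ⊕ Fin m)}
    (hS : ∀ t ∈ S, inl t ∈ S') (h1 : ¬(t₁ ∈ S ∧ t₂ ∈ S)) :
    tr.induce S →g (subdivTree tr t₁ t₂ m).induce S' where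
  toFun p := ⟨inl p.1, hS p.1 p.2⟩
  map_rel' := by
    rintro ⟨p, hp⟩ ⟨q, hq⟩ hpq
    simp only [comap_adj, Function.Embedding.coe_subtype] at hpq ⊢
    exact subdiv_adj_inl_inl.2 ⟨hpq, fun hc => h1 ⟨hc.1 ▸ hp, hc.2 ▸ hq⟩,
      fun hc => h1 ⟨hc.2 ▸ hq, hc.1 ▸ hp⟩⟩

lemma support_conn_B {bag : T → Set V} {x y : Fin m → V}
    (hx : Function.Injective x)
    (hb₁ : bag t₁ = Set.range x) (hb₂ : bag t₂ = Set.range y)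
    {v : V} {i : Fin m} (hv : v = x i) (hvy : v ∉ Set.range y)
    (hcv : (tr.induce {t | v ∈ bag t}).Connected) :
    ((subdivTree tr t₁ t₂ m).induce {w | v ∈ subdivBag bag x y w}).Connected := by
  have ht₁' : t₁ ∈ {t | v ∈ bag t} := by
    simp only [Set.mem_setOf_eq, hb₁]; exact ⟨i, hv.symm⟩
  have ht₂' : t₂ ∉ {t | v ∈ bag t} := by
    simp only [Set.mem_setOf_eq, hb₂]; exact hvy
  have ht₁ : (inl t₁ : T ⊕ Fin m) ∈ {w | v ∈ subdivBag bag x y w} := ht₁'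
  have hmem_inr : ∀ j : Fin m, (inr j : T ⊕ Fin m) ∈ {w | v ∈ subdivBag bag x y w} ↔ j ≤ i := by
    intro j
    simp only [Set.mem_setOf_eq, subdivBag, Sum.elim_inr, Set.mem_union, Set.mem_image,
      Set.mem_setOf_eq]
    constructor
    · rintro (⟨i', hi', he⟩ | ⟨i', _, he⟩)
      · rwa [← hx (he.trans hv)]
      · exact absurd ⟨i', he⟩ hvy
    · exact fun h => Or.inl ⟨i, h, hv.symm⟩
  have key : ∀ w : {w | v ∈ subdivBag bag x y w},
      ((subdivTree tr t₁ t₂ m).induce {w | v ∈ subdivBag bag x y w}).Reachable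
        ⟨inl t₁, ht₁⟩ w := by
    rintro ⟨(t | j), hw⟩
    · exact Reachable.map (inlHom (S' := {w | v ∈ subdivBag bag x y w}) tr t₁ t₂
        (fun t ht => ht) (fun hc => ht₂' hc.2)) (hcv.preconnected ⟨t₁, ht₁'⟩ ⟨t, hw⟩)
    · have chain : ∀ (n : ℕ) (hn : n < m) (hni : n ≤ i.val),
          ((subdivTree tr t₁ t₂ m).induce {w | v ∈ subdivBag bag x y w}).Reachable
            ⟨inl t₁, ht₁⟩ ⟨inr ⟨n, hn⟩, (hmem_inr _).2 hni⟩ := by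
        intro n
        induction n with
        | zero =>
          intro hn _
          refine Adj.reachable ?_
          simp only [comap_adj, Function.Embedding.coe_subtype]
          exact subdiv_adj_inl_inr.2 (Or.inl ⟨rfl, rfl⟩)
        | succ n ih =>
          intro hn hni
          refine (ih (by omega) (by omega)).trans (Adj.reachable ?_)
          simp only [comap_adj, Function.Embedding.coe_subtype]
          exact subdiv_adj_inr_inr.2 (Or.inl rfl)
      exact chain j.1 j.2 ((hmem_inr j).1 hw)
  rw [connected_iff]
  exact ⟨fun a b => (key a).symm.trans (key b), ⟨⟨inl t₁, ht₁⟩⟩⟩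

lemma support_conn_C {bag : T → Set V} {x y : Fin m → V}
    (hy : Function.Injective y)
    (hb₁ : bag t₁ = Set.range x) (hb₂ : bag t₂ = Set.range y)
    {v : V} {i : Fin m} (hv : v = y i) (hvx : v ∉ Set.range x)
    (hcv : (tr.induce {t | v ∈ bag t}).Connected) :
    ((subdivTree tr t₁ t₂ m).induce {w | v ∈ subdivBag bag x y w}).Connected := by
  have ht₂' : t₂ ∈ {t | v ∈ bag t} := by
    simp only [Set.mem_setOf_eq, hb₂]; exact ⟨i, hv.symm⟩
  have ht₁' : t₁ ∉ {t | v ∈ bag t} := by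
    simp only [Set.mem_setOf_eq, hb₁]; exact hvx
  have ht₂ : (inl t₂ : T ⊕ Fin m) ∈ {w | v ∈ subdivBag bag x y w} := ht₂'
  have hmem_inr : ∀ j : Fin m, (inr j : T ⊕ Fin m) ∈ {w | v ∈ subdivBag bag x y w} ↔ i ≤ j := by
    intro j
    simp only [Set.mem_setOf_eq, subdivBag, Sum.elim_inr, Set.mem_union, Set.mem_image,
      Set.mem_setOf_eq]
    constructor
    · rintro (⟨i', _, he⟩ | ⟨i', hi', he⟩)
      · exact absurd ⟨i', he⟩ hvx
      · rwa [← hy (he.trans hv)]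
    · exact fun h => Or.inr ⟨i, h, hv.symm⟩
  have key : ∀ w : {w | v ∈ subdivBag bag x y w},
      ((subdivTree tr t₁ t₂ m).induce {w | v ∈ subdivBag bag x y w}).Reachable
        ⟨inl t₂, ht₂⟩ w := by
    rintro ⟨(t | j), hw⟩
    · exact Reachable.map (inlHom (S' := {w | v ∈ subdivBag bag x y w}) tr t₁ t₂
        (fun t ht => ht) (fun hc => ht₁' hc.1)) (hcv.preconnected ⟨t₂, ht₂'⟩ ⟨t, hw⟩)
    · have chain : ∀ (d n : ℕ) (hn : n < m) (hni : i.val ≤ n), m - 1 - n = d →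
          ((subdivTree tr t₁ t₂ m).induce {w | v ∈ subdivBag bag x y w}).Reachable
            ⟨inl t₂, ht₂⟩ ⟨inr ⟨n, hn⟩, (hmem_inr _).2 hni⟩ := by
        intro d
        induction d with
        | zero =>
          intro n hn hni hd
          refine Adj.reachable ?_
          simp only [comap_adj, Function.Embedding.coe_subtype]
          exact subdiv_adj_inl_inr.2 (Or.inr ⟨rfl, show n + 1 = m by omega⟩)
        | succ d ih =>
          intro n hn hni hd
          refine ((ih (n + 1) (by omega) (by omega) (by omega)).trans (Adj.reachable ?_))
          simp only [comap_adj, Function.Embedding.coe_subtype]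
          exact subdiv_adj_inr_inr.2 (Or.inr rfl)
      exact chain (m - 1 - j.1) j.1 j.2 (Fin.le_def.1 ((hmem_inr j).1 hw)) rfl
  rw [connected_iff]
  exact ⟨fun a b => (key a).symm.trans (key b), ⟨⟨inl t₂, ht₂⟩⟩⟩

/-- Adding a perfect matching between two disjoint bags of adjacent nodes of a width-`k`
tree decomposition increases the treewidth to at most `k + 1`. -/
theorem stmt7 {V T : Type} (G : SimpleGraph V) (tr : SimpleGraph T) (bag : T → Set V)
    (k : ℕ) (hd : IsTreeDecomp G tr bag) (hw : ∀ t, (bag t).ncard ≤ k + 1)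
    (t₁ t₂ : T) (hadj : tr.Adj t₁ t₂) (m : ℕ) (x y : Fin m → V)
    (hx : Function.Injective x) (hy : Function.Injective y)
    (hb₁ : bag t₁ = Set.range x) (hb₂ : bag t₂ = Set.range y)
    (hdisj : Disjoint (bag t₁) (bag t₂)) :
    treewidth (SimpleGraph.fromRel fun u v =>
        G.Adj u v ∨ ∃ i : Fin m, u = x i ∧ v = y i) ≤ k + 1 := by
  obtain ⟨htree, hcover, hconn, hedge⟩ := hd
  have hxy : ∀ {v : V}, v ∈ Set.range x → v ∈ Set.range y → False := fun h1 h2 =>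
    Set.disjoint_left.1 (by rwa [hb₁, hb₂] at hdisj) h1 h2
  rcases Nat.eq_zero_or_pos m with hm | hm
  · subst hm
    apply Nat.sInf_le
    refine ⟨T, tr, bag, ⟨htree, hcover, hconn, ?_⟩, fun t => le_trans (hw t) (by omega)⟩
    intro u v huv
    rw [fromRel_adj] at huv
    obtain ⟨hne, (h | ⟨i, _⟩) | (h | ⟨i, _⟩)⟩ := huv
    · exact hedge u v h
    · exact i.elim0
    · obtain ⟨t, h1, h2⟩ := hedge v u h
      exact ⟨t, h2, h1⟩
    · exact i.elim0
  · apply Nat.sInf_le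
    refine ⟨T ⊕ Fin m, subdivTree tr t₁ t₂ m, subdivBag bag x y,
      ⟨⟨subdiv_connected htree.isConnected hm, subdiv_isAcyclic htree hadj⟩, ?_, ?_, ?_⟩, ?_⟩
    · intro v
      obtain ⟨t, ht⟩ := hcover v
      exact ⟨inl t, ht⟩
    · intro v
      by_cases hvx : v ∈ Set.range x
      · obtain ⟨i, hi⟩ := hvx
        exact support_conn_B hx hb₁ hb₂ hi.symm (fun h => hxy ⟨i, hi⟩ h) (hconn v)
      · by_cases hvy : v ∈ Set.range y
        · obtain ⟨i, hi⟩ := hvy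
          exact support_conn_C hy hb₁ hb₂ hi.symm hvx (hconn v)
        · exact support_conn_A hb₁ hvx hvy (hconn v)
    · intro u v huv
      rw [fromRel_adj] at huv
      obtain ⟨hne, (h | ⟨i, hu, hv⟩) | (h | ⟨i, hv, hu⟩)⟩ := huv
      · obtain ⟨t, h1, h2⟩ := hedge u v h
        exact ⟨inl t, h1, h2⟩
      · refine ⟨inr i, ?_, ?_⟩
        · rw [hu]
          exact Or.inl ⟨i, le_refl i, rfl⟩
        · rw [hv]
          exact Or.inr ⟨i, le_refl i, rfl⟩
      · obtain ⟨t, h1, h2⟩ := hedge v u h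
        exact ⟨inl t, h2, h1⟩
      · refine ⟨inr i, ?_, ?_⟩
        · rw [hu]
          exact Or.inr ⟨i, le_refl i, rfl⟩
        · rw [hv]
          exact Or.inl ⟨i, le_refl i, rfl⟩
    · have hmk : m ≤ k + 1 := by
        have h1 : (bag t₁).ncard = m := by
          rw [hb₁, ← Set.image_univ, Set.ncard_image_of_injective _ hx]
          simp [Set.ncard_univ]
        have := hw t₁
        omega
      rintro (t | j)
      · exact (hw t).trans (by omega)
      · exact (subdivBag_inr_ncard bag x y j).trans (by omega)
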